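/- Assume n ≥ 9 and let u ∈ V be well positioned (m(u) ≤ 2·MinMed). Then for all v, z ∈ V: max{1/n, dist(u,v)/W(u)} ≥ (1/18)·dist(z,v)/W(z). -/
import Mathlib


open Finset

/-- The `Q`-quantile distance of `u` to the finite point set `V`: the smallest radius `r`
such that the closed ball of radius `r` around `u` contains at least `Q` points of `V`. -/
noncomputable def medDist {X : Type*} [MetricSpace X] (V : Finset X) (Q : ℕ) (u : X) : ℝ :=
  sInf {r : ℝ | Q ≤ (V.filter fun v => dist u v ≤ r).card}

/-- The median distance `m(u)`: the `⌈1+n/2⌉`-th smallest distance from `u` to `V`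
(where `⌈1+n/2⌉ = (n+1)/2 + 1` using integer division). -/
noncomputable def med {X : Type*} [MetricSpace X] (V : Finset X) (u : X) : ℝ :=
  medDist V ((V.card + 1) / 2 + 1) u

section Aux
variable {X : Type*} [MetricSpace X]

lemma medS_bddBelow (V : Finset X) {Q : ℕ} (hQ : 1 ≤ Q) (u : X) :
    BddBelow {r : ℝ | Q ≤ (V.filter fun v => dist u v ≤ r).card} := by
  refine ⟨0, fun r hr => ?_⟩
  simp only [Set.mem_setOf_eq] at hr
  obtain ⟨v, hv⟩ := Finset.card_pos.mp (lt_of_lt_of_le hQ hr)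
  exact le_trans dist_nonneg (Finset.mem_filter.mp hv).2

lemma medS_nonempty (V : Finset X) {Q : ℕ} (hQn : Q ≤ V.card) (u : X) :
    Set.Nonempty {r : ℝ | Q ≤ (V.filter fun v => dist u v ≤ r).card} := by
  refine ⟨∑ w ∈ V, dist u w, ?_⟩
  simp only [Set.mem_setOf_eq]
  have heq : (V.filter fun v => dist u v ≤ ∑ w ∈ V, dist u w) = V :=
    Finset.filter_true_of_mem (fun v hv => Finset.single_le_sum (f := fun w => dist u w) (fun w _ => dist_nonneg) hv)
  rw [heq]
  exact hQn

lemma medDist_nonneg (V : Finset X) {Q : ℕ} (hQ : 1 ≤ Q) (u : X) :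
    0 ≤ medDist V Q u := by
  apply Real.sInf_nonneg
  intro r hr
  simp only [Set.mem_setOf_eq] at hr
  obtain ⟨v, hv⟩ := Finset.card_pos.mp (lt_of_lt_of_le hQ hr)
  exact le_trans dist_nonneg (Finset.mem_filter.mp hv).2

lemma medDist_mem (V : Finset X) {Q : ℕ} (hQ1 : 1 ≤ Q) (hQn : Q ≤ V.card) (u : X) :
    Q ≤ (V.filter fun v => dist u v ≤ medDist V Q u).card := by
  have hmdef : medDist V Q u = sInf {r : ℝ | Q ≤ (V.filter fun v => dist u v ≤ r).card} := rfl
  set m := medDist V Q u with hm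
  by_cases hall : ∀ v ∈ V, dist u v ≤ m
  · have heq : (V.filter fun v => dist u v ≤ m) = V := Finset.filter_true_of_mem hall
    rw [heq]; exact hQn
  · push_neg at hall
    set T := V.filter fun v => m < dist u v with hT
    have hTne : T.Nonempty := by
      obtain ⟨v, hv, hv2⟩ := hall
      exact ⟨v, Finset.mem_filter.mpr ⟨hv, hv2⟩⟩
    obtain ⟨v0, hv0, hmin⟩ := T.exists_min_image (dist u) hTne
    have hlt : sInf {r : ℝ | Q ≤ (V.filter fun v => dist u v ≤ r).card} < dist u v0 := by
      rw [← hmdef]; exact (Finset.mem_filter.mp hv0).2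
    obtain ⟨r, hrS, hrlt⟩ := (csInf_lt_iff (medS_bddBelow V hQ1 u) (medS_nonempty V hQn u)).mp hlt
    have hrm : m ≤ r := by rw [hmdef]; exact csInf_le (medS_bddBelow V hQ1 u) hrS
    have hsub : (V.filter fun w => dist u w ≤ r) ⊆ V.filter fun w => dist u w ≤ m := by
      intro w hw
      rw [Finset.mem_filter] at hw ⊢
      refine ⟨hw.1, ?_⟩
      by_contra h
      push_neg at h
      have hwT : w ∈ T := Finset.mem_filter.mpr ⟨hw.1, h⟩
      have := hmin w hwT
      linarith [hw.2]
    exact le_trans hrS (Finset.card_le_card hsub)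

lemma medDist_count_lt (V : Finset X) {Q : ℕ} (hQ1 : 1 ≤ Q) (u : X) :
    (V.filter fun v => dist u v < medDist V Q u).card < Q := by
  by_contra h
  push_neg at h
  set A := V.filter fun v => dist u v < medDist V Q u with hA
  have hAne : A.Nonempty := Finset.card_pos.mp (lt_of_lt_of_le hQ1 h)
  obtain ⟨v0, hv0, hmax⟩ := A.exists_max_image (dist u) hAne
  have hr : dist u v0 ∈ {r : ℝ | Q ≤ (V.filter fun v => dist u v ≤ r).card} := by
    simp only [Set.mem_setOf_eq]
    refine le_trans h (Finset.card_le_card ?_)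
    intro w hw
    have h1 := (Finset.mem_filter.mp hw).1
    have h2 := hmax w hw
    exact Finset.mem_filter.mpr ⟨h1, h2⟩
  have hle : medDist V Q u ≤ dist u v0 := csInf_le (medS_bddBelow V hQ1 u) hr
  have hlt : dist u v0 < medDist V Q u := (Finset.mem_filter.mp hv0).2
  exact absurd hle (not_le.mpr hlt)

end Aux

/-- If `n ≥ 9` and `u ∈ V` is well positioned (`m(u) ≤ 2·MinMed`, i.e.
`m(u) ≤ 2·m(w)` for all `w ∈ V`), then for all `v, z ∈ V`,
`max{1/n, dist(u,v)/W(u)} ≥ (1/18)·dist(z,v)/W(z)`. -/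
theorem stmt6 {X : Type*} [MetricSpace X] (V : Finset X) (hn : 9 ≤ V.card)
    (u : X) (hu : u ∈ V) (hwp : ∀ w ∈ V, med V u ≤ 2 * med V w) :
    ∀ v ∈ V, ∀ z ∈ V,
      (1 / 18) * (dist z v / ∑ w ∈ V, dist z w) ≤
        max (1 / (V.card : ℝ)) (dist u v / ∑ w ∈ V, dist u w) := by
  classical
  intro v hv z hz
  set n := V.card with hncard
  set Q := (n + 1) / 2 + 1 with hQ
  have hQ1 : 1 ≤ Q := by omega
  have hQn : Q ≤ n := by omega
  set mu := med V u with hmu'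
  set mz := med V z with hmz'
  have hmu0 : 0 ≤ mu := medDist_nonneg V hQ1 u
  have hmz0 : 0 ≤ mz := medDist_nonneg V hQ1 z
  have hwpz : mu ≤ 2 * mz := hwp z hz
  set Wu := ∑ w ∈ V, dist u w with hWu
  set Wz := ∑ w ∈ V, dist z w with hWz
  have hWz0 : 0 ≤ Wz := Finset.sum_nonneg fun w _ => dist_nonneg
  -- count of points with dist z w ≥ mz is at least n + 1 - Q
  have hcnt : (V.filter fun w => dist z w < mz).card < Q := medDist_count_lt V hQ1 z
  have hsplit : (V.filter fun w => dist z w < mz).card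
      + (V.filter fun w => ¬ dist z w < mz).card = n :=
    Finset.card_filter_add_card_filter_not _
  set G := V.filter fun w => ¬ dist z w < mz with hG
  have hGcard : n + 1 - Q ≤ G.card := by omega
  -- W(z) ≥ |G| * mz
  have hWzG : (G.card : ℝ) * mz ≤ Wz := by
    calc (G.card : ℝ) * mz = ∑ _w ∈ G, mz := by rw [Finset.sum_const, nsmul_eq_mul]
      _ ≤ ∑ w ∈ G, dist z w :=
        Finset.sum_le_sum (fun w hw => not_lt.mp (Finset.mem_filter.mp hw).2)
      _ ≤ Wz := Finset.sum_le_sum_of_subset_of_nonneg (Finset.filter_subset _ _)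
        (fun w _ _ => dist_nonneg)
  have hkG : ((n + 1 - Q : ℕ) : ℝ) * mz ≤ Wz := by
    refine le_trans (mul_le_mul_of_nonneg_right ?_ hmz0) hWzG
    exact_mod_cast hGcard
  have hk1 : (n : ℝ) ≤ 3 * ((n + 1 - Q : ℕ) : ℝ) := by
    have : n ≤ 3 * (n + 1 - Q) := by omega
    exact_mod_cast this
  have hk2 : 4 * (n : ℝ) ≤ 9 * ((n + 1 - Q : ℕ) : ℝ) := by
    have : 4 * n ≤ 9 * (n + 1 - Q) := by omega
    exact_mod_cast this
  -- balls intersect : dist u z ≤ mu + mz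
  have hAu : Q ≤ (V.filter fun w => dist u w ≤ mu).card := medDist_mem V hQ1 hQn u
  have hAz : Q ≤ (V.filter fun w => dist z w ≤ mz).card := medDist_mem V hQ1 hQn z
  have hduz : dist u z ≤ mu + mz := by
    set A := V.filter fun w => dist u w ≤ mu with hA
    set B := V.filter fun w => dist z w ≤ mz with hB
    have hunion : (A ∪ B).card ≤ n := Finset.card_le_card (by
      intro w hw
      rcases Finset.mem_union.mp hw with h | h
      · exact (Finset.mem_filter.mp h).1
      · exact (Finset.mem_filter.mp h).1)
    have hint : 0 < (A ∩ B).card := by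
      have := Finset.card_union_add_card_inter A B
      omega
    obtain ⟨y, hy⟩ := Finset.card_pos.mp hint
    have hy1 : dist u y ≤ mu := (Finset.mem_filter.mp (Finset.mem_inter.mp hy).1).2
    have hy2 : dist z y ≤ mz := (Finset.mem_filter.mp (Finset.mem_inter.mp hy).2).2
    calc dist u z ≤ dist u y + dist y z := dist_triangle u y z
      _ = dist u y + dist z y := by rw [dist_comm y z]
      _ ≤ mu + mz := add_le_add hy1 hy2
  -- W(u) ≤ W(z) + n * dist u z
  have hWuWz : Wu ≤ Wz + n * dist u z := by
    have h1 : Wu ≤ ∑ w ∈ V, (dist u z + dist z w) :=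
      Finset.sum_le_sum fun w _ => dist_triangle u z w
    have h2 : ∑ w ∈ V, (dist u z + dist z w) = n * dist u z + Wz := by
      rw [Finset.sum_add_distrib, Finset.sum_const, nsmul_eq_mul]
    linarith
  have hn9 : (9 : ℝ) ≤ n := by exact_mod_cast hn
  have hnpos : (0 : ℝ) < n := by linarith
  have hdzv : (0:ℝ) ≤ dist z v := dist_nonneg
  have hrw : (1:ℝ) / 18 * (dist z v / Wz) = dist z v / (18 * Wz) := by ring
  by_cases hcase : dist u v ≤ mu + mz
  · -- Case 1: use 1/n branch
    refine le_trans ?_ (le_max_left _ _)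
    have hzv : dist z v ≤ 6 * mz := by
      have h1 : dist z v ≤ dist z u + dist u v := dist_triangle z u v
      have h2 : dist z u = dist u z := dist_comm z u
      linarith
    rcases eq_or_lt_of_le hWz0 with hWz0' | hWzpos
    · have hle : dist z v ≤ Wz := Finset.single_le_sum
        (f := fun w => dist z w) (fun w _ => dist_nonneg) hv
      have hzv0 : dist z v = 0 := le_antisymm (hWz0' ▸ hle) hdzv
      rw [hzv0]
      simp
    · rw [hrw, div_le_div_iff₀ (by positivity) hnpos]
      have e1 : (n:ℝ) * dist z v ≤ (n:ℝ) * (6 * mz) :=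
        mul_le_mul_of_nonneg_left hzv hnpos.le
      have e2 : (n:ℝ) * mz ≤ 3 * ((n + 1 - Q : ℕ) : ℝ) * mz :=
        mul_le_mul_of_nonneg_right hk1 hmz0
      nlinarith [hkG]
  · push_neg at hcase
    refine le_trans ?_ (le_max_right _ _)
    have hduv0 : 0 < dist u v := lt_of_le_of_lt (by linarith) hcase
    have hWupos : 0 < Wu := lt_of_lt_of_le hduv0
      (Finset.single_le_sum (f := fun w => dist u w) (fun w _ => dist_nonneg) hv)
    have hzv : dist z v ≤ 2 * dist u v := by
      have h1 : dist z v ≤ dist z u + dist u v := dist_triangle z u v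
      have h2 : dist z u = dist u z := dist_comm z u
      linarith
    have hnmz : (n : ℝ) * mz ≤ (9/4) * Wz := by
      have e1 : 4 * (n:ℝ) * mz ≤ 9 * ((n + 1 - Q : ℕ) : ℝ) * mz :=
        mul_le_mul_of_nonneg_right hk2 hmz0
      linarith [hkG]
    have hWu31 : Wu ≤ (31/4) * Wz := by
      have e1 : (n:ℝ) * dist u z ≤ (n:ℝ) * (mu + mz) :=
        mul_le_mul_of_nonneg_left hduz hnpos.le
      have e2 : (n:ℝ) * (mu + mz) ≤ (n:ℝ) * (3 * mz) :=
        mul_le_mul_of_nonneg_left (by linarith) hnpos.le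
      linarith
    have hWzpos : 0 < Wz := by linarith
    rw [hrw, div_le_div_iff₀ (by positivity) hWupos]
    have e1 : dist z v * Wu ≤ (2 * dist u v) * Wu :=
      mul_le_mul_of_nonneg_right hzv hWupos.le
    have e2 : (2 * dist u v) * Wu ≤ (2 * dist u v) * ((31/4) * Wz) :=
      mul_le_mul_of_nonneg_left hWu31 (by positivity)
    have e3 : 0 ≤ dist u v * Wz := mul_nonneg hduv0.le hWz0
    linarith
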